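/- arXiv:1611.04580 — 3 statements merged into one kernel-verified Lean document; each statement's English description precedes it below -/
import Mathlib

section
/- Let A be a finite alphabet, let C be an element of ℕ⟨A⟩ with constant term (C,1) = 0, and suppose there exist P, S ∈ ℕ⟨A⟩ such that C = P(A̲ − 1)S + 1, where A̲ is the sum of the letters of A. Then P and S are polynomials all of whose coefficients are 0 or 1. -/
open Polynomial

namespace CodesConj

/-- A (variable-length) code: a set of nonempty words such that every product of
codewords has a unique factorization into codewords. -/
def IsCode {A : Type*} (X : Set (FreeMonoid A)) : Prop :=
  (1 : FreeMonoid A) ∉ X ∧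
    ∀ l₁ l₂ : List (FreeMonoid A), (∀ w ∈ l₁, w ∈ X) → (∀ w ∈ l₂, w ∈ X) →
      l₁.prod = l₂.prod → l₁ = l₂

/-- A maximal code over the alphabet `A`. -/
def IsMaximalCode {A : Type*} (X : Set (FreeMonoid A)) : Prop :=
  IsCode X ∧ ∀ Y : Set (FreeMonoid A), IsCode Y → X ⊆ Y → X = Y

/-- The characteristic polynomial of a finite set of words, in `ℤ⟨A⟩`. -/
noncomputable def charPoly {A : Type*} (X : Finset (FreeMonoid A)) :
    MonoidAlgebra ℤ (FreeMonoid A) :=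
  ∑ w ∈ X, MonoidAlgebra.single w 1

/-- The sum of the letters of the alphabet, `A̲ ∈ ℤ⟨A⟩`. -/
noncomputable def alphaPoly (A : Type*) [Fintype A] : MonoidAlgebra ℤ (FreeMonoid A) :=
  ∑ a : A, MonoidAlgebra.single (FreeMonoid.of a) 1

/-- `a^H ∈ ℤ[a]` : the characteristic polynomial of a finite set of naturals. -/
noncomputable def expPoly (H : Finset ℕ) : Polynomial ℤ := ∑ h ∈ H, Polynomial.X ^ h

/-- `a^H ∈ ℕ[a]` : the characteristic polynomial of a finite set of naturals. -/
noncomputable def expPolyN (H : Finset ℕ) : Polynomial ℕ := ∑ h ∈ H, Polynomial.X ^ h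

/-- `(T, R)` is a factorization of `ℤ_n`: every `z ∈ {0, …, n−1}` has a unique
representation `z ≡ t + r (mod n)` with `t ∈ T`, `r ∈ R`. -/
def IsFactorizationMod (n : ℕ) (T R : Finset ℕ) : Prop :=
  ∀ z < n, ∃! p : ℕ × ℕ, p.1 ∈ T ∧ p.2 ∈ R ∧ (p.1 + p.2) % n = z

/-- Krasner factorization of order `n`: `a^I · a^J = 1 + a + ⋯ + a^{n−1}` in `ℕ[a]`. -/
def IsKrasner (n : ℕ) (I J : Finset ℕ) : Prop :=
  expPolyN I * expPolyN J = ∑ k ∈ Finset.range n, Polynomial.X ^ k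

/-- Krasner factorization of order `n`, unique-representation form: every
`z ∈ {0, …, n−1}` is uniquely `z = i + j`, `i ∈ I`, `j ∈ J`. -/
def IsKrasnerU (n : ℕ) (I J : Finset ℕ) : Prop :=
  ∀ z < n, ∃! p : ℕ × ℕ, p.1 ∈ I ∧ p.2 ∈ J ∧ p.1 + p.2 = z

/-- A chain of distinct positive divisors `k 0 = 1 ∣ k 1 ∣ ⋯ ∣ k s = n`. -/
def IsDivisorChain (k : ℕ → ℕ) (s n : ℕ) : Prop :=
  k 0 = 1 ∧ k s = n ∧ ∀ j, j < s → k j ∣ k (j + 1) ∧ k j < k (j + 1)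

/-- The set `{0, d, 2d, …, e − d}`, whose polynomial is `(a^e − 1)/(a^d − 1)` when `d ∣ e`. -/
def Dstep (d e : ℕ) : Finset ℕ := (Finset.range (e / d)).image fun i => i * d

/-- Sumset of two finite sets of naturals. -/
def sumOp (S T : Finset ℕ) : Finset ℕ := (S ×ˢ T).image fun p => p.1 + p.2

/-- The Hajós operation `S ∘ T`: the family of sets `{s + f s ∣ s ∈ S}` for an
arbitrary choice `f` of elements of `T`. -/
def circOp (S T : Finset ℕ) : Set (Finset ℕ) :=
  {U | ∃ f : ℕ → ℕ, (∀ s ∈ S, f s ∈ T) ∧ U = S.image fun s => s + f s}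

/-- The family of "R-sides" of Hajós factorizations for the chain `k`: starting from `{0}`,
combine with `D_j` by sumset for odd `j` and by `∘` for even `j`. -/
def hajosFamR (k : ℕ → ℕ) : ℕ → Set (Finset ℕ)
  | 0 => {({0} : Finset ℕ)}
  | j + 1 =>
    if Odd (j + 1) then
      {U | ∃ S ∈ hajosFamR k j, U = sumOp S (Dstep (k j) (k (j + 1)))}
    else
      {U | ∃ S ∈ hajosFamR k j, U ∈ circOp S (Dstep (k j) (k (j + 1)))}

/-- The family of "T-sides" of Hajós factorizations for the chain `k`: starting from `{0}`,
combine with `D_j` by `∘` for odd `j` and by sumset for even `j`. -/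
def hajosFamT (k : ℕ → ℕ) : ℕ → Set (Finset ℕ)
  | 0 => {({0} : Finset ℕ)}
  | j + 1 =>
    if Odd (j + 1) then
      {U | ∃ S ∈ hajosFamT k j, U ∈ circOp S (Dstep (k j) (k (j + 1)))}
    else
      {U | ∃ S ∈ hajosFamT k j, U = sumOp S (Dstep (k j) (k (j + 1)))}

/-- The set of residues modulo `n` of a finite set of naturals. -/
def residues (n : ℕ) (X : Finset ℕ) : Finset ℕ := X.image (· % n)

/-- `(R, T)` is a Hajós factorization of `ℤ_n` with respect to the chain `k` of length `s`. -/
def IsHajosWrt (n : ℕ) (k : ℕ → ℕ) (s : ℕ) (R T : Finset ℕ) : Prop :=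
  IsDivisorChain k s n ∧ residues n R ∈ hajosFamR k s ∧ residues n T ∈ hajosFamT k s

/-- `(R, T)` is a Hajós factorization of `ℤ_n`. -/
def IsHajos (n : ℕ) (R T : Finset ℕ) : Prop := ∃ k s, IsHajosWrt n k s R T

/-- The Krasner set `I` associated with a chain: the sumset of the `D_j`'s for even `j`. -/
def chainI (k : ℕ → ℕ) : ℕ → Finset ℕ
  | 0 => ({0} : Finset ℕ)
  | j + 1 => if Even (j + 1) then sumOp (chainI k j) (Dstep (k j) (k (j + 1))) else chainI k j

/-- The Krasner set `J` associated with a chain: the sumset of the `D_j`'s for odd `j`. -/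
def chainJ (k : ℕ → ℕ) : ℕ → Finset ℕ
  | 0 => ({0} : Finset ℕ)
  | j + 1 => if Odd (j + 1) then sumOp (chainJ k j) (Dstep (k j) (k (j + 1))) else chainJ k j

/-- `(I, J)` is a Krasner companion factorization of the Hajós factorization `(R, T)` of `ℤ_n`:
it arises from a common chain of divisors of `n` defining `(R, T)`. -/
def IsKrasnerCompanion (n : ℕ) (I J R T : Finset ℕ) : Prop :=
  ∃ k s, IsHajosWrt n k s R T ∧ I = chainI k s ∧ J = chainJ k s

/-- The recursive construction of good arrangements (with respect to the rows) of families
of `m` subsets of `ℕ`, as `m × ℓ` matrices: reduction mod `n`; base cases (one column of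
singletons, or the full rows `0, 1, …, n−1`); columnwise juxtaposition of the translates
`kh + D⁽¹⁾` in the sumset case; entrywise replacement `r ↦ r + λh` in the `∘` case. -/
inductive GoodRows (m : ℕ) : (n : ℕ) → (ℓ : ℕ) → (Fin m → Fin ℓ → ℕ) → Prop
  | mod (n ℓ : ℕ) (D : Fin m → Fin ℓ → ℕ) :
      GoodRows m n ℓ (fun p q => D p q % n) → GoodRows m n ℓ D
  | singleton (n : ℕ) (r : Fin m → ℕ) (h : ∀ p, r p < n) :
      GoodRows m n 1 fun p _ => r p
  | full (n : ℕ) : GoodRows m n n fun _ q => (q : ℕ)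
  | sumCase (h g ℓ₁ : ℕ) (hℓ : 0 < ℓ₁) (D1 : Fin m → Fin ℓ₁ → ℕ) :
      GoodRows m h ℓ₁ D1 →
      GoodRows m (g * h) (g * ℓ₁) fun p q =>
        ((q : ℕ) / ℓ₁) * h + D1 p ⟨(q : ℕ) % ℓ₁, Nat.mod_lt _ hℓ⟩
  | circCase (h g ℓ₁ : ℕ) (D1 lam : Fin m → Fin ℓ₁ → ℕ) (hlam : ∀ p q, lam p q < g) :
      GoodRows m h ℓ₁ D1 →
      GoodRows m (g * h) ℓ₁ fun p q => D1 p q + lam p q * h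

/-- The set of entries of the `p`-th row of a matrix. -/
def rowSet {m ℓ : ℕ} (D : Fin m → Fin ℓ → ℕ) (p : Fin m) : Finset ℕ :=
  Finset.image (D p) Finset.univ

/-- A subset `C₁` of `a^*ba^*` (encoded as a set of pairs of exponents) has a good
arrangement with `(I, J)` as a Krasner associated pair: there is a matrix arrangement
`(a^{r p q} b a^{v p q})` of `C₁` such that every row set and column set form a Hajós
factorization of `ℤ_n` having `(I, J)` as a Krasner companion factorization with respect
to a chain of divisors of `n`, the matrix of the `r`'s is a good arrangement with respect
to the rows, and the matrix of the `v`'s is a good arrangement with respect to the columns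
(i.e. its transpose is a good arrangement with respect to the rows). -/
def IsGoodArrangement (n : ℕ) (C1 : Set (ℕ × ℕ)) (I J : Finset ℕ) : Prop :=
  ∃ (m ℓ : ℕ) (r v : Fin m → Fin ℓ → ℕ),
    Function.Injective (fun pq : Fin m × Fin ℓ => (r pq.1 pq.2, v pq.1 pq.2)) ∧
    C1 = Set.range (fun pq : Fin m × Fin ℓ => (r pq.1 pq.2, v pq.1 pq.2)) ∧
    (∀ (p : Fin m) (q : Fin ℓ),
      IsKrasnerCompanion n I J (rowSet r p) (rowSet (fun q' p' => v p' q') q)) ∧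
    GoodRows m n ℓ r ∧
    GoodRows ℓ n m (fun q p => v p q)

/-- `X^*`: the submonoid generated by `X`. -/
def starSet {A : Type*} (X : Set (FreeMonoid A)) : Set (FreeMonoid A) :=
  ↑(Submonoid.closure X)

/-- The word `a^i b a^j`. -/
def abaWord {A : Type*} (a b : A) (i j : ℕ) : FreeMonoid A :=
  FreeMonoid.of a ^ i * FreeMonoid.of b * FreeMonoid.of a ^ j

/-- The word `a^i w a^j`. -/
def awaWord {A : Type*} (a : A) (w : FreeMonoid A) (i j : ℕ) : FreeMonoid A :=
  FreeMonoid.of a ^ i * w * FreeMonoid.of a ^ j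

/-- `w ∈ B(a^*B)^*` where `B = A \ {a}`: `w` is a nonempty word whose first and last
letters are different from `a`. -/
def InBStar {A : Type*} (a : A) (w : FreeMonoid A) : Prop :=
  w ≠ 1 ∧ w.toList.head? ≠ some a ∧ w.toList.getLast? ≠ some a

/-- `|X|`: the maximal length of a word of `X`. -/
def maxLen {A : Type*} (X : Finset (FreeMonoid A)) : ℕ := X.sup fun w => w.toList.length

/-- `w` is strongly right completable for `X`. -/
def StronglyRightCompletable {A : Type*} (X : Set (FreeMonoid A)) (w : FreeMonoid A) : Prop :=
  ∀ u : FreeMonoid A, ∃ v : FreeMonoid A, w * u * v ∈ starSet X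

/-- `a^P` is a left set of `X` (with `n` the order of `a`). -/
def IsLeftSet {A : Type*} (X : Finset (FreeMonoid A)) (a : A) (n : ℕ) (P : Finset ℕ) : Prop :=
  ∃ y : FreeMonoid A, StronglyRightCompletable (↑X) y ∧
    ∀ i : ℕ, i ∈ P ↔ i < n ∧ y * FreeMonoid.of a ^ (2 * n * maxLen X + i) ∈ starSet (↑X)

/-- `a^Q` is a right set of `X` (with `n` the order of `a`). -/
def IsRightSet {A : Type*} (X : Finset (FreeMonoid A)) (a : A) (n : ℕ) (Q : Finset ℕ) : Prop :=
  (∃ x : FreeMonoid A, ∀ k : ℕ,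
      k ∈ Q ↔ k < n ∧ ∃ u, FreeMonoid.of a ^ (k + 2 * n * maxLen X) * x * u ∈ starSet (↑X)) ∧
    ∀ i ∈ Q, ∀ j ∈ Q, i < j →
      ¬∃ u ∈ starSet (↑X : Set (FreeMonoid A)), u * FreeMonoid.of a ^ (j - i) ∈ starSet (↑X)

/-- The set `X_w = (a^* w a^* ∩ X^*) \ [aⁿ(a^* w a^* ∩ X^*) ∩ (a^* w a^* ∩ X^*)aⁿ]`. -/
def XwSet {A : Type*} (X : Finset (FreeMonoid A)) (a : A) (n : ℕ) (w : FreeMonoid A) :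
    Set (FreeMonoid A) :=
  {u | ((∃ i j, u = awaWord a w i j) ∧ u ∈ starSet (↑X)) ∧
    ¬((∃ v, ((∃ i j, v = awaWord a w i j) ∧ v ∈ starSet (↑X)) ∧
        u = FreeMonoid.of a ^ n * v) ∧
      (∃ v, ((∃ i j, v = awaWord a w i j) ∧ v ∈ starSet (↑X)) ∧
        u = v * FreeMonoid.of a ^ n))}

/-- The set of pairs of exponents `(i, j)` with `a^i w a^j ∈ X_w`. -/
def XwPairs {A : Type*} (X : Finset (FreeMonoid A)) (a : A) (n : ℕ) (w : FreeMonoid A) :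
    Set (ℕ × ℕ) :=
  {pr | awaWord a w pr.1 pr.2 ∈ XwSet X a n w}

/-- A positively factorizing code: a finite maximal code `C` with
`C̲ − 1 = P̲ (A̲ − 1) S̲` for finite sets of words `P, S`. -/
def IsPositivelyFactorizing {A : Type*} [Fintype A] (C : Finset (FreeMonoid A)) : Prop :=
  IsMaximalCode (↑C : Set (FreeMonoid A)) ∧
    ∃ P S : Finset (FreeMonoid A),
      charPoly C - 1 = charPoly P * (alphaPoly A - 1) * charPoly S

section Statement1Aux

variable {A : Type*}

/-- Auxiliary: support contained in words of length at least `k`. -/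
def Sge (k : ℕ) (f : MonoidAlgebra ℤ (FreeMonoid A)) : Prop :=
  ∀ w : FreeMonoid A, FreeMonoid.length w < k → f.coeff w = 0

lemma Sge.mul {k m : ℕ} {f g : MonoidAlgebra ℤ (FreeMonoid A)}
    (hf : Sge k f) (hg : Sge m g) : Sge (k + m) (f * g) := by
  classical
  intro w hw
  rw [MonoidAlgebra.mul_apply, Finsupp.sum]
  refine Finset.sum_eq_zero fun x _ => ?_
  rw [Finsupp.sum]
  refine Finset.sum_eq_zero fun y _ => ?_
  split_ifs with hxy
  · have hlen : FreeMonoid.length x + FreeMonoid.length y = FreeMonoid.length w := by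
      rw [← hxy, FreeMonoid.length_mul]
    rcases Nat.lt_or_ge (FreeMonoid.length x) k with hlt | hge
    · rw [hf x hlt, zero_mul]
    · rw [hg y (by omega), mul_zero]
  · rfl

lemma Sge.zero' (f : MonoidAlgebra ℤ (FreeMonoid A)) : Sge 0 f :=
  fun _ hw => absurd hw (Nat.not_lt_zero _)

lemma Sge.mul_left {m : ℕ} (f : MonoidAlgebra ℤ (FreeMonoid A))
    {g : MonoidAlgebra ℤ (FreeMonoid A)} (hg : Sge m g) : Sge m (f * g) := by
  have := (Sge.zero' f).mul hg; rwa [zero_add] at this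

lemma Sge.mul_right {m : ℕ} {f : MonoidAlgebra ℤ (FreeMonoid A)}
    (g : MonoidAlgebra ℤ (FreeMonoid A)) (hf : Sge m f) : Sge m (f * g) := by
  have := hf.mul (Sge.zero' g); rwa [add_zero] at this

lemma Sge.pow {f : MonoidAlgebra ℤ (FreeMonoid A)} (hf : Sge 1 f) (n : ℕ) : Sge n (f ^ n) := by
  induction n with
  | zero => exact Sge.zero' _
  | succ n ih => rw [pow_succ]; exact ih.mul hf

lemma Sge.neg {k : ℕ} {f : MonoidAlgebra ℤ (FreeMonoid A)} (hf : Sge k f) : Sge k (-f) := by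
  intro w hw; rw [MonoidAlgebra.coeff_neg, Finsupp.neg_apply, hf w hw, neg_zero]

lemma Sge.add {k : ℕ} {f g : MonoidAlgebra ℤ (FreeMonoid A)} (hf : Sge k f) (hg : Sge k g) :
    Sge k (f + g) := by
  intro w hw; rw [MonoidAlgebra.coeff_add, Finsupp.add_apply, hf w hw, hg w hw, add_zero]

lemma Sge.sub {k : ℕ} {f g : MonoidAlgebra ℤ (FreeMonoid A)} (hf : Sge k f) (hg : Sge k g) :
    Sge k (f - g) := by
  intro w hw; rw [MonoidAlgebra.coeff_sub, Finsupp.sub_apply, hf w hw, hg w hw, sub_zero]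

lemma mul_apply_ge {f g : MonoidAlgebra ℤ (FreeMonoid A)}
    (hf : ∀ w, 0 ≤ f.coeff w) (hg : ∀ w, 0 ≤ g.coeff w) (u v : FreeMonoid A) :
    f.coeff u * g.coeff v ≤ (f * g).coeff (u * v) := by
  classical
  have hterm : ∀ x y : FreeMonoid A,
      0 ≤ (if x * y = u * v then f.coeff x * g.coeff y else 0) := by
    intro x y; split_ifs
    · exact mul_nonneg (hf x) (hg y)
    · exact le_refl 0
  rw [MonoidAlgebra.mul_apply]
  simp only [Finsupp.sum]
  by_cases hu : f.coeff u = 0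
  · rw [hu, zero_mul]
    exact Finset.sum_nonneg fun x _ => Finset.sum_nonneg fun y _ => hterm x y
  by_cases hv : g.coeff v = 0
  · rw [hv, mul_zero]
    exact Finset.sum_nonneg fun x _ => Finset.sum_nonneg fun y _ => hterm x y
  calc f.coeff u * g.coeff v = if u * v = u * v then f.coeff u * g.coeff v else 0 := by simp
    _ ≤ ∑ y ∈ g.coeff.support, if u * y = u * v then f.coeff u * g.coeff y else 0 :=
        Finset.single_le_sum (fun y _ => hterm u y) (Finsupp.mem_support_iff.2 hv)
    _ ≤ ∑ x ∈ f.coeff.support, ∑ y ∈ g.coeff.support, if x * y = u * v then f.coeff x * g.coeff y else 0 :=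
        Finset.single_le_sum (fun x _ => Finset.sum_nonneg fun y _ => hterm x y)
          (Finsupp.mem_support_iff.2 hu)

lemma mul_nonneg' {f g : MonoidAlgebra ℤ (FreeMonoid A)}
    (hf : ∀ w, 0 ≤ f.coeff w) (hg : ∀ w, 0 ≤ g.coeff w) : ∀ w, 0 ≤ (f * g).coeff w := by
  classical
  intro w
  rw [MonoidAlgebra.mul_apply, Finsupp.sum]
  refine Finset.sum_nonneg fun x _ => ?_
  rw [Finsupp.sum]
  refine Finset.sum_nonneg fun y _ => ?_
  split_ifs
  · exact mul_nonneg (hf x) (hg y)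
  · exact le_refl 0

lemma pow_nonneg' {f : MonoidAlgebra ℤ (FreeMonoid A)} (hf : ∀ w, 0 ≤ f.coeff w) (n : ℕ) :
    ∀ w, 0 ≤ (f ^ n).coeff w := by
  classical
  induction n with
  | zero =>
    intro w
    rw [pow_zero, MonoidAlgebra.one_def, MonoidAlgebra.coeff_single, Finsupp.single_apply]
    split_ifs <;> omega
  | succ n ih => rw [pow_succ]; exact mul_nonneg' ih hf

lemma mul_apply_one' (f g : MonoidAlgebra ℤ (FreeMonoid A)) :
    (f * g).coeff 1 = f.coeff 1 * g.coeff 1 := by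
  classical
  have hone : ∀ x y : FreeMonoid A, x * y = 1 ↔ x = 1 ∧ y = 1 := by
    intro x y
    constructor
    · intro hxy
      have hlen := congrArg FreeMonoid.length hxy
      rw [FreeMonoid.length_mul, FreeMonoid.length_one] at hlen
      constructor <;> rw [← FreeMonoid.length_eq_zero] <;> omega
    · rintro ⟨rfl, rfl⟩; rw [mul_one]
  rw [MonoidAlgebra.mul_apply]
  simp only [Finsupp.sum]
  have inner : ∀ x : FreeMonoid A,
      (∑ y ∈ g.coeff.support, if x * y = 1 then f.coeff x * g.coeff y else 0)
        = if x = 1 then f.coeff x * g.coeff 1 else 0 := by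
    intro x
    by_cases hx : x = 1
    · subst hx
      rw [if_pos rfl]
      have hcong : ∀ y ∈ g.coeff.support, (if (1 : FreeMonoid A) * y = 1 then f.coeff 1 * g.coeff y else 0)
          = if y = 1 then f.coeff 1 * g.coeff y else 0 := fun y _ => by rw [one_mul]
      rw [Finset.sum_congr rfl hcong, Finset.sum_ite_eq' g.coeff.support 1 fun y => f.coeff 1 * g.coeff y]
      by_cases hmem : (1 : FreeMonoid A) ∈ g.coeff.support
      · rw [if_pos hmem]
      · rw [if_neg hmem, Finsupp.notMem_support_iff.1 hmem, mul_zero]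
    · rw [if_neg hx]
      exact Finset.sum_eq_zero fun y _ => if_neg (fun hc => hx ((hone x y).1 hc).1)
  rw [Finset.sum_congr rfl fun x _ => inner x,
    Finset.sum_ite_eq' f.coeff.support 1 fun x => f.coeff x * g.coeff 1]
  by_cases hmem : (1 : FreeMonoid A) ∈ f.coeff.support
  · rw [if_pos hmem]
  · rw [if_neg hmem, Finsupp.notMem_support_iff.1 hmem, zero_mul]

lemma single_of_mul_apply_one (a : A) (f : MonoidAlgebra ℤ (FreeMonoid A)) :
    (MonoidAlgebra.single (FreeMonoid.of a) (1 : ℤ) * f).coeff 1 = 0 := by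
  refine MonoidAlgebra.single_mul_apply_of_not_exists_mul (1 : ℤ) f ?_
  rintro ⟨d, hd⟩
  have := congrArg FreeMonoid.length hd
  simp [FreeMonoid.length_mul] at this
  omega

lemma single_of_mul_apply_cons (a b : A) (t : FreeMonoid A) (f : MonoidAlgebra ℤ (FreeMonoid A))
    [Decidable (a = b)] :
    (MonoidAlgebra.single (FreeMonoid.of a) (1 : ℤ) * f).coeff (FreeMonoid.of b * t)
      = if a = b then f.coeff t else 0 := by
  by_cases hab : a = b
  · subst hab
    rw [if_pos rfl]
    have H : ∀ y, FreeMonoid.of a * y = FreeMonoid.of a * t ↔ y = t := by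
      intro y
      constructor
      · intro hy
        have h2 : FreeMonoid.toList (FreeMonoid.of a * y)
            = FreeMonoid.toList (FreeMonoid.of a * t) := congrArg _ hy
        simpa [FreeMonoid.toList_of_mul] using h2
      · rintro rfl; rfl
    rw [MonoidAlgebra.coeff_single_mul_eq_mul_coeff (x := f) t (fun y _ => H y), one_mul]
  · rw [if_neg hab]
    refine MonoidAlgebra.single_mul_apply_of_not_exists_mul (1 : ℤ) f ?_
    rintro ⟨d, hd⟩
    have h2 : FreeMonoid.toList (FreeMonoid.of b * t)
        = FreeMonoid.toList (FreeMonoid.of a * d) := congrArg _ hd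
    simp only [FreeMonoid.toList_of_mul, List.cons.injEq] at h2
    exact hab h2.1.symm

variable [Fintype A]

lemma alpha_mul (g : MonoidAlgebra ℤ (FreeMonoid A)) :
    alphaPoly A * g = ∑ a : A, MonoidAlgebra.single (FreeMonoid.of a) (1 : ℤ) * g := by
  rw [alphaPoly, Finset.sum_mul]

lemma alpha_pow_apply (n : ℕ) (w : FreeMonoid A) :
    ((alphaPoly A) ^ n).coeff w = if FreeMonoid.length w = n then 1 else 0 := by
  classical
  induction n generalizing w with
  | zero =>
    rw [pow_zero, MonoidAlgebra.one_def, MonoidAlgebra.coeff_single, Finsupp.single_apply]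
    by_cases hw : w = 1
    · subst hw; simp [FreeMonoid.length_one]
    · rw [if_neg (fun hc => hw hc.symm), if_neg (fun hc => hw (FreeMonoid.length_eq_zero.1 hc))]
  | succ n ih =>
    rw [pow_succ', alpha_mul, MonoidAlgebra.coeff_sum, Finsupp.finset_sum_apply]
    induction w using FreeMonoid.casesOn with
    | one =>
      rw [Finset.sum_congr rfl fun a _ => single_of_mul_apply_one a _]
      simp [FreeMonoid.length_one]
    | of_mul b t =>
      rw [Finset.sum_congr rfl fun a _ => single_of_mul_apply_cons a b t _]
      rw [Finset.sum_ite_eq' Finset.univ b fun _ => ((alphaPoly A) ^ n).coeff t,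
        if_pos (Finset.mem_univ b), ih t]
      have hl : FreeMonoid.length (FreeMonoid.of b * t) = FreeMonoid.length t + 1 := by
        rw [FreeMonoid.length_mul, FreeMonoid.length_of]; omega
      rw [hl]
      by_cases hc : FreeMonoid.length t = n
      · rw [if_pos hc, if_pos (by omega)]
      · rw [if_neg hc, if_neg (by omega)]

lemma alpha_apply_one : (alphaPoly A).coeff 1 = 0 := by
  have := alpha_pow_apply (A := A) 1 1
  rw [pow_one] at this
  rw [this, if_neg (by simp [FreeMonoid.length_one])]

/-- The key free-ring identity behind the truncated series computation. -/
lemma ring_key {R : Type*} [Ring R] (S T P AN D P' Q E₁ E₂ E₃ : R)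
    (hAN : AN * D = 1 - E₃) (hPp : P' * P = 1 - E₂) (hQT : Q * T = 1 - E₁)
    (hPDS : P * D * S = Q) :
    S * T * P - AN
      = -(AN * E₂) - AN * P' * E₁ * P + AN * E₂ * D * (S * T * P) + E₃ * (S * T * P) := by
  have e1 : E₁ = 1 - P * D * S * T := by rw [hPDS, hQT, sub_sub_cancel]
  have e2 : E₂ = 1 - P' * P := by rw [hPp, sub_sub_cancel]
  have e3 : E₃ = 1 - AN * D := by rw [hAN, sub_sub_cancel]
  rw [e1, e2, e3]
  noncomm_ring

/-- Core estimate: under the factorization hypothesis, every coefficient of `P` and of `S`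
is at most 1. -/
lemma coeff_le_one (C P S : MonoidAlgebra ℤ (FreeMonoid A))
    (hpos : ∀ w : FreeMonoid A, 0 ≤ C.coeff w) (h1 : C.coeff (1 : FreeMonoid A) = 0)
    (hP : ∀ w : FreeMonoid A, 0 ≤ P.coeff w) (hS : ∀ w : FreeMonoid A, 0 ≤ S.coeff w)
    (hP1 : P.coeff 1 = 1) (hS1 : S.coeff 1 = 1)
    (hPDS : P * (1 - alphaPoly A) * S = 1 - C) (w : FreeMonoid A) :
    P.coeff w ≤ 1 ∧ S.coeff w ≤ 1 := by
  classical
  set N := FreeMonoid.length w with hN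
  set α := alphaPoly A with hα
  set D : MonoidAlgebra ℤ (FreeMonoid A) := 1 - α with hD
  set T : MonoidAlgebra ℤ (FreeMonoid A) := ∑ n ∈ Finset.range (N + 1), C ^ n with hT
  set P' : MonoidAlgebra ℤ (FreeMonoid A) := ∑ n ∈ Finset.range (N + 1), (1 - P) ^ n with hP'
  set AN : MonoidAlgebra ℤ (FreeMonoid A) := ∑ n ∈ Finset.range (N + 1), α ^ n with hAN
  -- geometric-series identities
  have g1 : AN * D = 1 - α ^ (N + 1) := by
    have hg := geom_sum_mul α (N + 1)
    have hrw : AN * D = -(AN * (α - 1)) := by rw [hD]; noncomm_ring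
    rw [hrw, hAN, hg, neg_sub]
  have g2 : P' * P = 1 - (1 - P) ^ (N + 1) := by
    have hg := geom_sum_mul (1 - P) (N + 1)
    have hrw : P' * P = -(P' * ((1 - P) - 1)) := by noncomm_ring
    rw [hrw, hP', hg, neg_sub]
  have hcomm : (1 - C) * T = T * (1 - C) := by
    have hc : Commute C T := Commute.sum_right _ _ _ fun i _ => (Commute.refl C).pow_right i
    exact ((Commute.one_left T).sub_left hc).eq
  have g3 : (1 - C) * T = 1 - C ^ (N + 1) := by
    have hg := geom_sum_mul C (N + 1)
    have hrw : T * (1 - C) = -(T * (C - 1)) := by noncomm_ring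
    rw [hcomm, hrw, hT, hg, neg_sub]
  -- the key identity
  have key := ring_key S T P AN D P' (1 - C) (C ^ (N + 1)) ((1 - P) ^ (N + 1)) (α ^ (N + 1))
    g1 g2 g3 hPDS
  -- support bounds
  have hC1 : Sge 1 C := by
    intro v hv
    have hv1 : v = 1 := FreeMonoid.length_eq_zero.1 (Nat.lt_one_iff.1 hv)
    subst hv1
    exact h1
  have hP1' : Sge 1 (1 - P) := by
    intro v hv
    have hv1 : v = 1 := FreeMonoid.length_eq_zero.1 (Nat.lt_one_iff.1 hv)
    subst hv1
    rw [MonoidAlgebra.coeff_sub, Finsupp.sub_apply, hP1, MonoidAlgebra.one_def, MonoidAlgebra.coeff_single, Finsupp.single_eq_same]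
    ring
  have hα1 : Sge 1 α := by
    intro v hv
    have hv1 : v = 1 := FreeMonoid.length_eq_zero.1 (Nat.lt_one_iff.1 hv)
    subst hv1
    rw [hα]
    exact alpha_apply_one
  have sE1 : Sge (N + 1) (C ^ (N + 1)) := hC1.pow (N + 1)
  have sE2 : Sge (N + 1) ((1 - P) ^ (N + 1)) := hP1'.pow (N + 1)
  have sE3 : Sge (N + 1) (α ^ (N + 1)) := hα1.pow (N + 1)
  have hsge : Sge (N + 1) (S * T * P - AN) := by
    rw [key]
    exact (((Sge.mul_left AN sE2).neg.sub
        (Sge.mul_right P (Sge.mul_left (AN * P') sE1))).add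
        (Sge.mul_right _ (Sge.mul_right D (Sge.mul_left AN sE2)))).add
      (Sge.mul_right _ sE3)
  -- evaluate at w
  have hANw : AN.coeff w = 1 := by
    rw [hAN, MonoidAlgebra.coeff_sum, Finsupp.finset_sum_apply,
      Finset.sum_congr rfl fun n _ => alpha_pow_apply n w,
      Finset.sum_ite_eq (Finset.range (N + 1)) (FreeMonoid.length w) fun _ => (1 : ℤ),
      if_pos (Finset.mem_range.2 (by omega))]
  have hval : (S * T * P).coeff w = 1 := by
    have h0 := hsge w (by omega)
    rw [MonoidAlgebra.coeff_sub, Finsupp.sub_apply, hANw] at h0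
    omega
  -- nonnegativity and constant terms
  have hTpos : ∀ v, 0 ≤ T.coeff v := by
    intro v
    rw [hT, MonoidAlgebra.coeff_sum, Finsupp.finset_sum_apply]
    exact Finset.sum_nonneg fun n _ => pow_nonneg' hpos n v
  have hT1 : T.coeff 1 = 1 := by
    rw [hT, MonoidAlgebra.coeff_sum, Finsupp.finset_sum_apply]
    rw [Finset.sum_eq_single 0]
    · rw [pow_zero, MonoidAlgebra.one_def, MonoidAlgebra.coeff_single, Finsupp.single_eq_same]
    · intro n _ hn
      exact (hC1.pow n) 1 (by rw [FreeMonoid.length_one]; omega)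
    · intro hmem
      exact absurd (Finset.mem_range.2 (by omega)) hmem
  constructor
  · have hge := mul_apply_ge (mul_nonneg' hS hTpos) hP 1 w
    rw [one_mul, mul_apply_one' S T, hS1, hT1, one_mul, one_mul, hval] at hge
    exact hge
  · have hge := mul_apply_ge hS (mul_nonneg' hTpos hP) w 1
    rw [mul_one, mul_apply_one' T P, hT1, hP1, one_mul, mul_one, ← mul_assoc, hval] at hge
    exact hge

end Statement1Aux

/-- Reutenauer. If `C ∈ ℕ⟨A⟩` has constant term 0 and
`C = P(A̲ − 1)S + 1` with `P, S ∈ ℕ⟨A⟩`, then `P` and `S` have coefficients 0, 1. -/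
theorem statement1 {A : Type*} [Fintype A] (C : MonoidAlgebra ℤ (FreeMonoid A))
    (hpos : ∀ w : FreeMonoid A, 0 ≤ C.coeff w) (h1 : C.coeff (1 : FreeMonoid A) = 0)
    (P S : MonoidAlgebra ℤ (FreeMonoid A))
    (hP : ∀ w : FreeMonoid A, 0 ≤ P.coeff w) (hS : ∀ w : FreeMonoid A, 0 ≤ S.coeff w)
    (h : C = P * (alphaPoly A - 1) * S + 1) :
    (∀ w : FreeMonoid A, P.coeff w = 0 ∨ P.coeff w = 1) ∧
      (∀ w : FreeMonoid A, S.coeff w = 0 ∨ S.coeff w = 1) := by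
  classical
  have hPDS : P * (1 - alphaPoly A) * S = 1 - C := by rw [h]; noncomm_ring
  have hone1 : (1 : MonoidAlgebra ℤ (FreeMonoid A)).coeff 1 = 1 := by
    rw [MonoidAlgebra.one_def, MonoidAlgebra.coeff_single, Finsupp.single_eq_same]
  have hconst : P.coeff 1 * S.coeff 1 = 1 := by
    have hc := mul_apply_one' (P * (1 - alphaPoly A)) S
    rw [hPDS, MonoidAlgebra.coeff_sub, Finsupp.sub_apply, hone1, h1, sub_zero, mul_apply_one' P (1 - alphaPoly A),
      MonoidAlgebra.coeff_sub, Finsupp.sub_apply, hone1, alpha_apply_one, sub_zero, mul_one] at hc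
    exact hc.symm
  have hP1 : P.coeff 1 = 1 := by
    rcases Int.eq_one_or_neg_one_of_mul_eq_one' hconst with ⟨h1', _⟩ | ⟨h1', _⟩
    · exact h1'
    · have := hP 1; omega
  have hS1 : S.coeff 1 = 1 := by
    rcases Int.eq_one_or_neg_one_of_mul_eq_one' hconst with ⟨_, h2'⟩ | ⟨_, h2'⟩
    · exact h2'
    · have := hS 1; omega
  constructor
  · intro w
    have hle := (coeff_le_one C P S hpos h1 hP hS hP1 hS1 hPDS w).1
    have := hP w; omega
  · intro w
    have hle := (coeff_le_one C P S hpos h1 hP hS hP1 hS1 hPDS w).2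
    have := hS w; omega

end CodesConj
end

section
/- Let (I,J) be a Krasner factorization of order n. Let R, R', M be finite subsets of ℕ such that a^R = a^I(1 + a^M(a−1)) and a^{R'} = a^{R_{(n)}}, where R_{(n)} is the set of residues modulo n of the elements of R. Then there exists a finite subset M' of ℕ such that a^{R'} = a^I(1 + a^{M'}(a−1)) and I + max(M') + 1 ⊆ {0,…,n−1}. Furthermore, writing R' = {r_1,…,r_q} and R = {r_1 + λ_1 n, …, r_q + λ_q n} with λ_1,…,λ_q ≥ 0, and setting a^H = a^{r_1 + {0, n, …, (λ_1 − 1)n}} + ⋯ + a^{r_q + {0, n, …, (λ_q − 1)n}}, one has a disjoint union M = M' ∪ M'' with M'' ⊆ ℕ, a^{M''} = a^J · a^H, and a^R = a^{R'} + a^I(a−1)a^{M''}. -/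
open Polynomial

namespace CodesConj

lemma expPoly_coeff (H : Finset ℕ) (k : ℕ) :
    (expPoly H).coeff k = if k ∈ H then 1 else 0 := by
  rw [expPoly, Polynomial.finset_sum_coeff]
  simp_rw [Polynomial.coeff_X_pow]
  simp [Finset.sum_ite_eq' H k (fun _ => (1:ℤ))]

lemma expPolyN_coeff (H : Finset ℕ) (k : ℕ) :
    (expPolyN H).coeff k = if k ∈ H then 1 else 0 := by
  rw [expPolyN, Polynomial.finset_sum_coeff]
  simp_rw [Polynomial.coeff_X_pow]
  simp [Finset.sum_ite_eq' H k (fun _ => (1:ℕ))]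

lemma expPoly_eq_map (H : Finset ℕ) :
    expPoly H = (expPolyN H).map (Nat.castRingHom ℤ) := by
  rw [expPoly, expPolyN, Polynomial.map_sum]
  simp

/-- count of pairs (j,s) with j+s ≤ k and j+s ≡ k mod n -/
def dcount (n : ℕ) (J S : Finset ℕ) (k : ℕ) : ℕ :=
  ((J ×ˢ S).filter fun p => p.1 + p.2 ≤ k ∧ (p.1 + p.2) % n = k % n).card

lemma coeff_mul_expPoly (J S : Finset ℕ) (k : ℕ) :
    (expPoly J * expPoly S).coeff k
      = (((J ×ˢ S).filter fun p => p.1 + p.2 = k).card : ℤ) := by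
  rw [expPoly, expPoly, Finset.sum_mul_sum]
  simp_rw [← pow_add]
  rw [← Finset.sum_product', Polynomial.finset_sum_coeff]
  simp_rw [Polynomial.coeff_X_pow]
  rw [Finset.sum_boole]
  norm_cast
  congr 1
  apply Finset.filter_congr
  intro p _
  exact eq_comm

lemma dcount_lt (n : ℕ) (J S : Finset ℕ) (k : ℕ) (hk : k < n) :
    dcount n J S k = ((J ×ˢ S).filter fun p => p.1 + p.2 = k).card := by
  unfold dcount
  congr 1
  apply Finset.filter_congr
  intro p _
  constructor
  · rintro ⟨h1, h2⟩
    rwa [Nat.mod_eq_of_lt (lt_of_le_of_lt h1 hk), Nat.mod_eq_of_lt hk] at h2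
  · rintro rfl; exact ⟨le_rfl, rfl⟩

lemma dcount_step (n : ℕ) (hn : 0 < n) (J S : Finset ℕ) (k : ℕ) (hk : n ≤ k) :
    dcount n J S k = dcount n J S (k - n)
      + ((J ×ˢ S).filter fun p => p.1 + p.2 = k).card := by
  unfold dcount
  have hmod : (k - n) % n = k % n := by
    conv_rhs => rw [← Nat.sub_add_cancel hk]
    rw [Nat.add_mod_right]
  rw [← Finset.card_union_of_disjoint]
  · congr 1
    rw [← Finset.filter_or]
    apply Finset.filter_congr
    intro p _
    constructor
    · rintro ⟨h1, h2⟩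
      rcases eq_or_lt_of_le h1 with h | h
      · exact Or.inr h
      · left
        have hdvd : n ∣ k - (p.1 + p.2) := by
          rw [← Nat.modEq_iff_dvd' h1]
          exact h2
        have : n ≤ k - (p.1 + p.2) := Nat.le_of_dvd (by omega) hdvd
        exact ⟨by omega, by rw [hmod]; exact h2⟩
    · rintro (⟨h1, h2⟩ | rfl)
      · exact ⟨by omega, by rw [← hmod]; exact h2⟩
      · exact ⟨le_rfl, rfl⟩
  · rw [Finset.disjoint_left]
    rintro p hp hp'
    rw [Finset.mem_filter] at hp hp'
    omega

lemma dcount_eq (n : ℕ) (hn : 0 < n) (J S : Finset ℕ) (F : Polynomial ℤ)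
    (h : expPoly J * expPoly S
        = (∑ m ∈ Finset.range n, Polynomial.X ^ m) + (Polynomial.X ^ n - 1) * F) :
    ∀ k, (dcount n J S k : ℤ) = 1 - F.coeff k := by
  intro k
  induction k using Nat.strong_induction_on with
  | _ k ih =>
    have hc := congrArg (fun p : Polynomial ℤ => p.coeff k) h
    simp only [Polynomial.coeff_add, coeff_mul_expPoly] at hc
    have hgeom : (∑ m ∈ Finset.range n, (Polynomial.X : Polynomial ℤ) ^ m).coeff k
        = if k < n then 1 else 0 := by
      rw [Polynomial.finset_sum_coeff]
      simp_rw [Polynomial.coeff_X_pow]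
      rw [Finset.sum_boole, Finset.filter_eq]
      split_ifs with h <;> simp_all [Finset.mem_range]
    have hXF : ((Polynomial.X ^ n - 1) * F).coeff k
        = (if n ≤ k then F.coeff (k - n) else 0) - F.coeff k := by
      rw [sub_mul, one_mul, Polynomial.coeff_sub, mul_comm, Polynomial.coeff_mul_X_pow']
    rw [hgeom, hXF] at hc
    by_cases hk : k < n
    · rw [dcount_lt n J S k hk, hc]
      simp only [if_pos hk, if_neg (by omega : ¬ n ≤ k)]
      ring
    · push_neg at hk
      have hkn : k - n < k := by omega
      rw [dcount_step n hn J S k hk]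
      push_cast
      rw [ih (k - n) hkn, hc]
      simp only [if_pos hk, if_neg (by omega : ¬ k < n)]
      ring

/-- reduction lemma. -/
theorem statement6 (n : ℕ) (hn : 1 ≤ n) (I J R R' M : Finset ℕ)
    (hK : IsKrasner n I J)
    (hRM : expPoly R = expPoly I * (1 + expPoly M * (Polynomial.X - 1)))
    (hR' : R' = residues n R)
    (q : ℕ) (r lam : Fin q → ℕ)
    (hrinj : Function.Injective r)
    (hrR' : R' = Finset.image r Finset.univ)
    (hRdec : R = Finset.image (fun i => r i + lam i * n) Finset.univ) :
    ∃ M' M'' : Finset ℕ,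
      expPoly R' = expPoly I * (1 + expPoly M' * (Polynomial.X - 1)) ∧
      (∀ i ∈ I, ∀ x ∈ M', i + x + 1 ≤ n - 1) ∧
      Disjoint M' M'' ∧ M = M' ∪ M'' ∧
      expPoly M'' =
        expPoly J * ∑ i : Fin q, ∑ u ∈ Finset.range (lam i), Polynomial.X ^ (r i + u * n) ∧
      expPoly R = expPoly R' + expPoly I * (Polynomial.X - 1) * expPoly M'' := by
  classical
  have hn0 : 0 < n := hn
  have hKz : expPoly I * expPoly J = ∑ k ∈ Finset.range n, (X : Polynomial ℤ) ^ k := by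
    have := congrArg (Polynomial.map (Nat.castRingHom ℤ)) hK
    simpa [expPoly_eq_map, Polynomial.map_sum, Polynomial.map_pow, Polynomial.map_mul]
      using this
  have hgeomX : (∑ k ∈ Finset.range n, (X : Polynomial ℤ) ^ k) * (X - 1) = X ^ n - 1 :=
    geom_sum_mul X n
  have hIJlt : ∀ i ∈ I, ∀ j ∈ J, i + j < n := by
    intro i hi j hj
    by_contra hcon
    push_neg at hcon
    have h1 : 1 ≤ (expPolyN I * expPolyN J).coeff (i + j) := by
      rw [Polynomial.coeff_mul]
      have hm : (i, j) ∈ Finset.HasAntidiagonal.antidiagonal (i + j) := by simp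
      have heq : (expPolyN I).coeff i * (expPolyN J).coeff j = 1 := by
        rw [expPolyN_coeff, expPolyN_coeff, if_pos hi, if_pos hj]
      calc 1 = (expPolyN I).coeff i * (expPolyN J).coeff j := heq.symm
        _ ≤ _ := Finset.single_le_sum
            (f := fun p : ℕ × ℕ => (expPolyN I).coeff p.1 * (expPolyN J).coeff p.2)
            (fun _ _ => Nat.zero_le _) hm
    rw [hK] at h1
    have h0 : (∑ k ∈ Finset.range n, (X : Polynomial ℕ) ^ k).coeff (i + j) = 0 := by
      rw [Polynomial.finset_sum_coeff]
      apply Finset.sum_eq_zero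
      intro m hm
      rw [Polynomial.coeff_X_pow, if_neg]
      rw [Finset.mem_range] at hm; omega
    omega
  have hJne : J.Nonempty := by
    rcases Finset.eq_empty_or_nonempty J with h | h
    · exfalso
      have hc : (0 : ℕ) = (∑ k ∈ Finset.range n, (X : Polynomial ℕ) ^ k).coeff 0 := by
        rw [← hK]; simp [h, expPolyN]
      rw [Polynomial.finset_sum_coeff] at hc
      simp_rw [Polynomial.coeff_X_pow] at hc
      rw [Finset.sum_ite_eq (Finset.range n) 0 (fun _ => (1:ℕ))] at hc
      simp [hn0] at hc
    · exact h
  have hIlt : ∀ i ∈ I, i < n := by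
    intro i hi
    obtain ⟨j, hj⟩ := hJne
    have := hIJlt i hi j hj; omega
  have hrR : ∀ i, r i + lam i * n ∈ R := by
    intro i; rw [hRdec]; exact Finset.mem_image_of_mem _ (Finset.mem_univ i)
  have hrlt : ∀ i, r i < n := by
    intro i
    have hmem : r i ∈ R' := by rw [hrR']; exact Finset.mem_image_of_mem _ (Finset.mem_univ i)
    rw [hR'] at hmem
    rcases Finset.mem_image.mp hmem with ⟨x, _, hx⟩
    rw [← hx]; exact Nat.mod_lt _ hn0
  have hR'lt : ∀ s ∈ R', s < n := by
    intro s hs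
    rw [hR'] at hs
    rcases Finset.mem_image.mp hs with ⟨x, _, hx⟩
    rw [← hx]; exact Nat.mod_lt _ hn0
  have hmodr : ∀ i, (r i + lam i * n) % n = r i := by
    intro i; rw [Nat.add_mul_mod_self_right, Nat.mod_eq_of_lt (hrlt i)]
  have hinj2 : Function.Injective fun i => r i + lam i * n := by
    intro a b hab
    apply hrinj
    have h := congrArg (· % n) hab
    simpa [hmodr] using h
  have hRp : expPoly R = ∑ i : Fin q, (X : Polynomial ℤ) ^ (r i + lam i * n) := by
    rw [hRdec, expPoly]
    exact Finset.sum_image (fun a _ b _ h => hinj2 h)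
  have hR'p : expPoly R' = ∑ i : Fin q, (X : Polynomial ℤ) ^ (r i) := by
    rw [hrR', expPoly]
    exact Finset.sum_image (fun a _ b _ h => hrinj h)
  set G : Polynomial ℤ := ∑ i : Fin q, ∑ u ∈ Finset.range (lam i), X ^ (r i + u * n) with hG
  have key1 : expPoly R - expPoly R' = (X ^ n - 1) * G := by
    rw [hRp, hR'p, hG, ← Finset.sum_sub_distrib, Finset.mul_sum]
    apply Finset.sum_congr rfl
    intro i _
    have hsum : (∑ u ∈ Finset.range (lam i), (X : Polynomial ℤ) ^ (r i + u * n))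
        = X ^ (r i) * ∑ u ∈ Finset.range (lam i), (X ^ n) ^ u := by
      rw [Finset.mul_sum]
      apply Finset.sum_congr rfl
      intro u _
      rw [← pow_mul, ← pow_add, Nat.mul_comm u n]
    rw [hsum]
    have hg := geom_sum_mul ((X : Polynomial ℤ) ^ n) (lam i)
    have hpow : ((X : Polynomial ℤ) ^ n) ^ (lam i) = X ^ (lam i * n) := by
      rw [← pow_mul, Nat.mul_comm]
    have hpow2 : (X : Polynomial ℤ) ^ (r i + lam i * n) = X ^ (r i) * X ^ (lam i * n) :=
      pow_add X _ _
    rw [hpow2, ← hpow]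
    linear_combination (-((X : Polynomial ℤ) ^ (r i))) * hg
  have key2 : (X : Polynomial ℤ) ^ n - 1 = expPoly I * expPoly J * (X - 1) := by
    rw [← hgeomX, hKz]
  set Qp : Polynomial ℤ := expPoly J * G with hQ
  have keyR : expPoly R = expPoly R' + expPoly I * (X - 1) * Qp := by
    rw [hQ]; linear_combination key1 + G * key2
  set Pp : Polynomial ℤ := expPoly M - Qp with hP
  have keyR' : expPoly R' = expPoly I * (1 + Pp * (X - 1)) := by
    rw [hP]; linear_combination hRM - keyR
  have hJRM : expPoly J * expPoly R
      = (∑ m ∈ Finset.range n, X ^ m) + (X ^ n - 1) * expPoly M := by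
    linear_combination expPoly J * hRM + (1 + expPoly M * (X - 1)) * hKz + expPoly M * hgeomX
  have hJRP : expPoly J * expPoly R'
      = (∑ m ∈ Finset.range n, X ^ m) + (X ^ n - 1) * Pp := by
    linear_combination expPoly J * keyR' + (1 + Pp * (X - 1)) * hKz + Pp * hgeomX
  have dM := dcount_eq n hn0 J R (expPoly M) hJRM
  have dP := dcount_eq n hn0 J R' Pp hJRP
  have hdR : ∀ k, dcount n J R k ≤ 1 := by
    intro k
    have h1 := dM k
    have h2 : (expPoly M).coeff k = 0 ∨ (expPoly M).coeff k = 1 := by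
      rw [expPoly_coeff]; split_ifs <;> simp
    rcases h2 with h2 | h2 <;> omega
  have hdR' : ∀ k, dcount n J R' k ≤ 1 := by
    intro k
    by_contra hcon
    push_neg at hcon
    obtain ⟨p₁, hp₁, p₂, hp₂, hne⟩ := Finset.one_lt_card.mp hcon
    have hp₁' := Finset.mem_filter.mp hp₁
    have hp₂' := Finset.mem_filter.mp hp₂
    obtain ⟨hj₁, hs₁⟩ := Finset.mem_product.mp hp₁'.1
    obtain ⟨hj₂, hs₂⟩ := Finset.mem_product.mp hp₂'.1
    rw [hrR'] at hs₁ hs₂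
    obtain ⟨i₁, _, hi₁⟩ := Finset.mem_image.mp hs₁
    obtain ⟨i₂, _, hi₂⟩ := Finset.mem_image.mp hs₂
    set x₁ := r i₁ + lam i₁ * n with hx₁
    set x₂ := r i₂ + lam i₂ * n with hx₂
    set k' := max (p₁.1 + x₁) (p₂.1 + x₂) with hk'
    have hm₁ : (p₁.1 + x₁) % n = k % n := by
      have he : p₁.1 + x₁ = (p₁.1 + p₁.2) + lam i₁ * n := by omega
      rw [he, Nat.add_mul_mod_self_right]
      exact hp₁'.2.2
    have hm₂ : (p₂.1 + x₂) % n = k % n := by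
      have he : p₂.1 + x₂ = (p₂.1 + p₂.2) + lam i₂ * n := by omega
      rw [he, Nat.add_mul_mod_self_right]
      exact hp₂'.2.2
    have hk'mod : k' % n = k % n := by
      rcases max_choice (p₁.1 + x₁) (p₂.1 + x₂) with h | h
      · rw [hk', h]; exact hm₁
      · rw [hk', h]; exact hm₂
    have hd2 : 2 ≤ dcount n J R k' := by
      rw [dcount]
      refine Finset.one_lt_card.mpr ⟨(p₁.1, x₁), ?_, (p₂.1, x₂), ?_, ?_⟩
      · rw [Finset.mem_filter, Finset.mem_product]
        exact ⟨⟨hj₁, hrR i₁⟩, le_max_left _ _, hm₁.trans hk'mod.symm⟩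
      · rw [Finset.mem_filter, Finset.mem_product]
        exact ⟨⟨hj₂, hrR i₂⟩, le_max_right _ _, hm₂.trans hk'mod.symm⟩
      · intro hEq
        rw [Prod.mk.injEq] at hEq
        obtain ⟨h1, h2⟩ := hEq
        have h3 : r i₁ = r i₂ := by
          have h4 := congrArg (· % n) h2
          simpa [hx₁, hx₂, hmodr] using h4
        apply hne
        rw [Prod.ext_iff]
        exact ⟨h1, by rw [← hi₁, ← hi₂, h3]⟩
    have := hdR k'
    omega
  have hP01 : ∀ k, Pp.coeff k = 0 ∨ Pp.coeff k = 1 := by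
    intro k
    have h1 := dP k
    have h2 := hdR' k
    omega
  have hQnn : ∀ k, 0 ≤ Qp.coeff k := by
    intro k
    rw [hQ, Polynomial.coeff_mul]
    apply Finset.sum_nonneg
    intro p _
    apply mul_nonneg
    · rw [expPoly_coeff]; split_ifs <;> simp
    · rw [hG, Polynomial.finset_sum_coeff]
      apply Finset.sum_nonneg; intro i _
      rw [Polynomial.finset_sum_coeff]
      apply Finset.sum_nonneg; intro u _
      rw [Polynomial.coeff_X_pow]; split_ifs <;> simp
  have hMPQ : ∀ k, (expPoly M).coeff k = Pp.coeff k + Qp.coeff k := by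
    intro k; rw [hP, Polynomial.coeff_sub]; ring
  set M' : Finset ℕ := M.filter (fun k => Pp.coeff k ≠ 0) with hM'
  set M'' : Finset ℕ := M.filter (fun k => ¬ Pp.coeff k ≠ 0) with hM''
  have hcoeffs : ∀ k, Pp.coeff k = (if k ∈ M' then 1 else 0) ∧
      Qp.coeff k = (if k ∈ M'' then 1 else 0) := by
    intro k
    have h1 := hP01 k
    have h2 := hQnn k
    have h3 := hMPQ k
    rw [expPoly_coeff] at h3
    have hm1 : k ∈ M' ↔ k ∈ M ∧ Pp.coeff k ≠ 0 := by rw [hM']; exact Finset.mem_filter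
    have hm2 : k ∈ M'' ↔ k ∈ M ∧ ¬ Pp.coeff k ≠ 0 := by rw [hM'']; exact Finset.mem_filter
    by_cases hk : k ∈ M
    · rw [if_pos hk] at h3
      rcases h1 with h1 | h1
      · have hn1 : k ∉ M' := fun hc => ((hm1.mp hc).2) h1
        have hn2 : k ∈ M'' := hm2.mpr ⟨hk, not_not.mpr h1⟩
        rw [if_neg hn1, if_pos hn2]
        constructor
        · exact h1
        · omega
      · have hn1 : k ∈ M' := hm1.mpr ⟨hk, by rw [h1]; norm_num⟩
        have hn2 : k ∉ M'' := fun hc => ((hm2.mp hc).2) (by rw [h1]; norm_num)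
        rw [if_pos hn1, if_neg hn2]
        constructor
        · exact h1
        · omega
    · rw [if_neg hk] at h3
      have hP0 : Pp.coeff k = 0 := by rcases h1 with h1 | h1 <;> omega
      have hn1 : k ∉ M' := fun hc => hk (hm1.mp hc).1
      have hn2 : k ∉ M'' := fun hc => hk (hm2.mp hc).1
      rw [if_neg hn1, if_neg hn2]
      constructor
      · exact hP0
      · omega
  have hPM' : expPoly M' = Pp := by
    ext k
    rw [expPoly_coeff, (hcoeffs k).1]
  have hQM'' : expPoly M'' = Qp := by
    ext k
    rw [expPoly_coeff, (hcoeffs k).2]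
  refine ⟨M', M'', ?_, ?_, ?_, ?_, ?_, ?_⟩
  · rw [hPM']; exact keyR'
  · intro i hi x hx
    rw [hM', Finset.mem_filter] at hx
    have hPne : Pp ≠ 0 := by
      intro h0
      apply hx.2
      rw [h0, Polynomial.coeff_zero]
    have hIzne : expPoly I ≠ 0 := by
      intro h0
      have hc := expPoly_coeff I i
      rw [h0, Polynomial.coeff_zero, if_pos hi] at hc
      norm_num at hc
    have hXone : (X - 1 : Polynomial ℤ) = X - Polynomial.C 1 := by rw [Polynomial.C_1]
    have hXne : (X - 1 : Polynomial ℤ) ≠ 0 := by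
      rw [hXone]; exact Polynomial.X_sub_C_ne_zero 1
    have hprod : expPoly I * Pp * (X - 1) = expPoly R' - expPoly I := by
      linear_combination -keyR'
    have hdeg : (expPoly R' - expPoly I).natDegree ≤ n - 1 := by
      apply Polynomial.natDegree_le_iff_coeff_eq_zero.mpr
      intro N hN
      have hNR' : N ∉ R' := fun hmem => by have := hR'lt N hmem; omega
      have hNI : N ∉ I := fun hmem => by have := hIlt N hmem; omega
      rw [Polynomial.coeff_sub, expPoly_coeff, expPoly_coeff, if_neg hNR', if_neg hNI,
        sub_zero]
    rw [← hprod, Polynomial.natDegree_mul (mul_ne_zero hIzne hPne) hXne,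
      Polynomial.natDegree_mul hIzne hPne, hXone, Polynomial.natDegree_X_sub_C] at hdeg
    have h1 : i ≤ (expPoly I).natDegree :=
      Polynomial.le_natDegree_of_ne_zero (by rw [expPoly_coeff, if_pos hi]; norm_num)
    have h2 : x ≤ Pp.natDegree := Polynomial.le_natDegree_of_ne_zero hx.2
    omega
  · rw [hM', hM'', Finset.disjoint_left]
    intro a ha hb
    rw [Finset.mem_filter] at ha hb
    exact hb.2 ha.2
  · rw [hM', hM'']
    exact (Finset.filter_union_filter_not_eq (fun k => Pp.coeff k ≠ 0) M).symm
  · rw [hQM'', hQ, hG]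
  · rw [hQM'']; exact keyR
end CodesConj
end

section
/- Let X ⊆ A^+ be a finite maximal code and let n be the order of the letter a ∈ A. For any left set a^P of X and any right set a^Q of X, the pair (P,Q) is a factorization of ℤ_n. -/
open Polynomial

namespace CodesConj

section Aux
variable {A : Type*}

lemma toList_pow (a : A) (k : ℕ) : (FreeMonoid.of a ^ k).toList = List.replicate k a := by
  induction k with
  | zero => rfl
  | succ k ih => rw [pow_succ, FreeMonoid.toList_mul, ih, FreeMonoid.toList_of, List.replicate_succ']

lemma pow_mem_code {X : Set (FreeMonoid A)} (hX : IsCode X) {a : A} {n : ℕ}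
    (ha : FreeMonoid.of a ^ n ∈ X) : ∀ k, FreeMonoid.of a ^ k ∈ X → k = n := by
  intro k hk
  have h := hX.2 (List.replicate n (FreeMonoid.of a ^ k)) (List.replicate k (FreeMonoid.of a ^ n))
    (by intro w hw; rw [List.eq_of_mem_replicate hw]; exact hk)
    (by intro w hw; rw [List.eq_of_mem_replicate hw]; exact ha)
    (by rw [List.prod_replicate, List.prod_replicate, ← pow_mul, ← pow_mul, Nat.mul_comm])
  have := congrArg List.length h
  simpa using this.symm

lemma n_pos {X : Set (FreeMonoid A)} (hX : IsCode X) {a : A} {n : ℕ}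
    (ha : FreeMonoid.of a ^ n ∈ X) : 0 < n := by
  rcases Nat.eq_zero_or_pos n with h | h
  · subst h; exact absurd ha (by simpa using hX.1)
  · exact h

lemma mem_starSet {X : Set (FreeMonoid A)} {w : FreeMonoid A} :
    w ∈ starSet X ↔ ∃ l : List (FreeMonoid A), (∀ y ∈ l, y ∈ X) ∧ l.prod = w := by
  constructor
  · exact fun h => Submonoid.exists_list_of_mem_closure h
  · rintro ⟨l, hl, rfl⟩
    exact Submonoid.list_prod_mem _ fun x hx => Submonoid.subset_closure (hl x hx)

lemma len_le_maxLen {X : Finset (FreeMonoid A)} {w : FreeMonoid A} (h : w ∈ X) :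
    w.toList.length ≤ maxLen X := Finset.le_sup h

lemma boundary_lemma {X : Finset (FreeMonoid A)} (hX : IsCode (↑X : Set (FreeMonoid A)))
    {a : A} {n : ℕ} (ha : FreeMonoid.of a ^ n ∈ X)
    (y x' : FreeMonoid A) (s : ℕ) (hs : maxLen X ≤ s)
    (hW : y * FreeMonoid.of a ^ s * x' ∈ starSet (↑X)) :
    ∃ δ, δ ≤ maxLen X ∧ ∀ m, δ ≤ m → m + maxLen X ≤ s → m % n = δ % n →
      y * FreeMonoid.of a ^ m ∈ starSet (↑X) ∧
      FreeMonoid.of a ^ (s - m) * x' ∈ starSet (↑X) := by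
  classical
  obtain ⟨l, hl, hprod⟩ := mem_starSet.1 hW
  set L := maxLen X with hL
  have hnL : n ≤ maxLen X := by
    have := len_le_maxLen ha
    rwa [toList_pow, List.length_replicate] at this
  have hnpos : 0 < n := n_pos hX ha
  have hWlist : (l.prod).toList
      = y.toList ++ (List.replicate s a ++ x'.toList) := by
    rw [hprod, FreeMonoid.toList_mul, FreeMonoid.toList_mul, toList_pow, List.append_assoc]
  have hWlen : (l.prod).toList.length = y.toList.length + s + x'.toList.length := by
    rw [hWlist]; simp [Nat.add_assoc]
  -- prefixes of the factorization
  have hpref : ∀ t, ((l.take t).prod).toList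
      = (l.prod.toList).take ((l.take t).prod.toList.length) := by
    intro t
    have hsplit : ((l.take t).prod).toList ++ ((l.drop t).prod).toList = l.prod.toList := by
      rw [← FreeMonoid.toList_mul, List.prod_take_mul_prod_drop]
    rw [← hsplit, List.take_left' rfl]
  -- Step A
  have stepA : ∀ t m, m ≤ s → ((l.take t).prod).toList.length = y.toList.length + m →
      (l.take t).prod = y * FreeMonoid.of a ^ m := by
    intro t m hm hlen
    apply FreeMonoid.toList.injective
    rw [hpref t, hlen, hWlist, FreeMonoid.toList_mul, toList_pow]
    rw [List.take_append, List.take_append_of_le_length (by simpa using hm), List.take_replicate]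
    rw [Nat.add_sub_cancel_left, Nat.min_eq_left hm, List.take_of_length_le (by omega)]
  -- Base: a first boundary m₀ ≤ L
  have base : ∃ m₀, m₀ ≤ L ∧ ∃ t, (l.take t).prod = y * FreeMonoid.of a ^ m₀ := by
    have hex : ∃ t, y.toList.length ≤ ((l.take t).prod).toList.length := by
      refine ⟨l.length, ?_⟩
      rw [List.take_length, hWlen]; omega
    have hspec := Nat.find_spec hex
    rcases Nat.eq_zero_or_pos (Nat.find hex) with h0 | hpos
    · refine ⟨0, by omega, 0, ?_⟩
      rw [h0] at hspec
      simp only [List.take_zero, List.prod_nil] at hspec ⊢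
      have hy1 : y.toList = [] := by
        have : y.toList.length = 0 := by simpa [FreeMonoid.toList_one] using Nat.le_zero.1 hspec
        exact List.length_eq_zero_iff.1 this
      have : y = 1 := FreeMonoid.toList.injective (by rw [hy1, FreeMonoid.toList_one])
      rw [this, pow_zero, one_mul]
    · obtain ⟨t', ht'eq⟩ : ∃ t', Nat.find hex = t' + 1 := ⟨Nat.find hex - 1, by omega⟩
      rw [ht'eq] at hspec
      have hlt : ((l.take t').prod).toList.length < y.toList.length := by
        have := Nat.find_min hex (m := t') (by omega)
        omega
      have ht' : t' < l.length := by
        by_contra hge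
        rw [List.take_of_length_le (by omega)] at hlt
        omega
      have hsucc : (l.take (t' + 1)).prod = (l.take t').prod * l[t'] := List.prod_take_succ l t' ht'
      have hclen : (l[t'] : FreeMonoid A).toList.length ≤ L :=
        len_le_maxLen (hl _ (List.getElem_mem ht'))
      have hlen1 : ((l.take (t' + 1)).prod).toList.length
          = ((l.take t').prod).toList.length + (l[t'] : FreeMonoid A).toList.length := by
        rw [hsucc, FreeMonoid.toList_mul, List.length_append]
      set m₀ := ((l.take (t' + 1)).prod).toList.length - y.toList.length with hm₀
      refine ⟨m₀, by omega, t' + 1, stepA _ _ (by omega) (by omega)⟩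
  -- Step C: boundaries propagate by n inside the run
  have stepC : ∀ m, m + L ≤ s → (∃ t, (l.take t).prod = y * FreeMonoid.of a ^ m) →
      ∃ t, (l.take t).prod = y * FreeMonoid.of a ^ (m + n) := by
    rintro m hm ⟨t, ht⟩
    have htlen : ((l.take t).prod).toList.length = y.toList.length + m := by
      rw [ht, FreeMonoid.toList_mul, List.length_append, toList_pow, List.length_replicate]
    have ht_lt : t < l.length := by
      by_contra hge
      rw [List.take_of_length_le (by omega)] at htlen
      omega
    have hsucc : (l.take (t + 1)).prod = (l.take t).prod * l[t] := List.prod_take_succ l t ht_lt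
    set c : FreeMonoid A := l[t] with hc
    have hcX : c ∈ X := hl _ (List.getElem_mem ht_lt)
    have hclen : c.toList.length ≤ L := len_le_maxLen hcX
    have hlen1 : ((l.take (t + 1)).prod).toList.length
        = y.toList.length + (m + c.toList.length) := by
      rw [hsucc, FreeMonoid.toList_mul, List.length_append, htlen]; omega
    have hA := stepA (t + 1) (m + c.toList.length) (by omega) hlen1
    rw [hsucc, ht] at hA
    -- deduce c = a ^ c.toList.length
    have hceq : c = FreeMonoid.of a ^ c.toList.length := by
      apply FreeMonoid.toList.injective
      have h3 := congrArg FreeMonoid.toList hA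
      rw [FreeMonoid.toList_mul, FreeMonoid.toList_mul, FreeMonoid.toList_mul,
        toList_pow, toList_pow, List.replicate_add] at h3
      simp only [List.append_assoc] at h3
      have h2 : FreeMonoid.toList c = List.replicate (FreeMonoid.toList c).length a :=
        List.append_cancel_left (List.append_cancel_left h3)
      exact h2.trans (toList_pow a _).symm
    have hcn : c.toList.length = n := pow_mem_code hX ha _ (by rw [← hceq]; exact hcX)
    refine ⟨t + 1, ?_⟩
    rw [hsucc, ht, hceq, hcn, mul_assoc, ← pow_add]
  obtain ⟨m₀, hm₀L, hSm₀⟩ := base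
  -- induction along the progression
  have stepD : ∀ j, m₀ + j * n + L ≤ s + n →
      ∃ t, (l.take t).prod = y * FreeMonoid.of a ^ (m₀ + j * n) := by
    intro j
    induction j with
    | zero => intro _; simpa using hSm₀
    | succ j ih =>
      intro hj
      have h1 : m₀ + j * n + L ≤ s := by
        have : (j + 1) * n = j * n + n := by ring
        omega
      have := stepC _ h1 (ih (by omega))
      have harr : m₀ + j * n + n = m₀ + (j + 1) * n := by ring
      rwa [harr] at this
  refine ⟨m₀, hm₀L, ?_⟩
  intro m hδm hmL hmod
  have hdvd : n ∣ m - m₀ := (Nat.modEq_iff_dvd' hδm).1 (by unfold Nat.ModEq; omega)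
  obtain ⟨j, hj⟩ := hdvd
  rw [Nat.mul_comm] at hj
  have hmeq : m = m₀ + j * n := by omega
  obtain ⟨t, ht⟩ := stepD j (by omega)
  rw [← hmeq] at ht
  constructor
  · rw [← ht]
    exact mem_starSet.2 ⟨l.take t, fun w hw => hl w (List.mem_of_mem_take hw), rfl⟩
  · have hdrop : (l.take t).prod * (l.drop t).prod = y * FreeMonoid.of a ^ s * x' := by
      rw [List.prod_take_mul_prod_drop, hprod]
    rw [ht] at hdrop
    have hsm : FreeMonoid.of a ^ s = FreeMonoid.of a ^ m * FreeMonoid.of a ^ (s - m) := by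
      rw [← pow_add]; congr 1; omega
    rw [hsm] at hdrop
    have : (l.drop t).prod = FreeMonoid.of a ^ (s - m) * x' := by
      apply mul_left_cancel (a := y * FreeMonoid.of a ^ m)
      rw [hdrop]; rw [mul_assoc, mul_assoc, mul_assoc]
    rw [← this]
    exact mem_starSet.2 ⟨l.drop t, fun w hw => hl w (List.mem_of_mem_drop hw), rfl⟩

end Aux

/-- For a finite maximal code `X` with `aⁿ ∈ X`, any left set `a^P`
and any right set `a^Q` of `X` give a factorization `(P, Q)` of `ℤ_n`. -/
theorem statement11 {A : Type*} [Fintype A] (X : Finset (FreeMonoid A))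
    (hX : IsMaximalCode (↑X : Set (FreeMonoid A))) (a : A) (n : ℕ)
    (ha : FreeMonoid.of a ^ n ∈ X) (P Q : Finset ℕ)
    (hP : IsLeftSet X a n P) (hQ : IsRightSet X a n Q) :
    IsFactorizationMod n P Q := by
  classical
  obtain ⟨hcode, -⟩ := hX
  have hnpos : 0 < n := n_pos hcode ha
  have hnL : n ≤ maxLen X := by
    have := len_le_maxLen ha
    rwa [toList_pow, List.length_replicate] at this
  obtain ⟨y, hySRC, hyP⟩ := hP
  obtain ⟨⟨x, hxQ⟩, hQ2⟩ := hQ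
  obtain ⟨M, hMdef⟩ : ∃ M, M = 2 * n * maxLen X := ⟨_, rfl⟩
  rw [← hMdef] at hyP hxQ
  have hM' : M = n * (2 * maxLen X) := by rw [hMdef]; ring
  have h2LM : 2 * maxLen X ≤ M := by
    rw [hM']
    calc 2 * maxLen X = 2 * maxLen X * 1 := by ring
    _ ≤ 2 * maxLen X * n := Nat.mul_le_mul_left _ hnpos
    _ = n * (2 * maxLen X) := by ring
  have haX : FreeMonoid.of a ^ n ∈ starSet (↑X : Set (FreeMonoid A)) :=
    Submonoid.subset_closure (Finset.mem_coe.2 ha)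
  -- no two solution pairs can have strictly comparable second components
  have key : ∀ p1 q1 p2 q2, p1 ∈ P → q1 ∈ Q → p2 ∈ P → q2 ∈ Q →
      (p1 + q1) % n = (p2 + q2) % n → q1 < q2 → False := by
    intro p1 q1 p2 q2 hp1 hq1 hp2 hq2 hzz hlt
    have hp1n : p1 < n := ((hyP p1).1 hp1).1
    have hp2n : p2 < n := ((hyP p2).1 hp2).1
    have hq2n : q2 < n := ((hxQ q2).1 hq2).1
    have hy1 : y * FreeMonoid.of a ^ (M + p1) ∈ starSet (↑X : Set (FreeMonoid A)) :=
      ((hyP p1).1 hp1).2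
    have hy2 : y * FreeMonoid.of a ^ (M + p2) ∈ starSet (↑X : Set (FreeMonoid A)) :=
      ((hyP p2).1 hp2).2
    apply hQ2 q1 hq1 q2 hq2 hlt
    obtain ⟨d, hd⟩ : ∃ d, d = q2 - q1 := ⟨_, rfl⟩
    rw [← hd]
    refine ⟨y * FreeMonoid.of a ^ (M + p2), hy2, ?_⟩
    -- p2 + d ≡ p1 (mod n)
    have hmeq : (p1 + q1) % n = ((p2 + d) + q1) % n := by
      rw [hzz]; congr 1; omega
    have hcan : (p2 + d) % n = p1 % n :=
      (Nat.ModEq.add_right_cancel' q1 hmeq.symm)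
    have hp1m : p1 % n = p1 := Nat.mod_eq_of_lt hp1n
    have hsplit := Nat.div_add_mod (p2 + d) n
    have hdiv2 : (p2 + d) / n < 2 := Nat.div_lt_of_lt_mul (by omega)
    obtain ⟨e, hedef⟩ : ∃ e, e = (p2 + d) / n := ⟨_, rfl⟩
    rw [← hedef] at hsplit hdiv2
    have hcases : p2 + d = p1 ∨ p2 + d = p1 + n := by
      have h01 : e = 0 ∨ e = 1 := by omega
      rcases h01 with h0 | h0
      · left; rw [h0, Nat.mul_zero] at hsplit; omega
      · right; rw [h0, Nat.mul_one] at hsplit; omega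
    have hexp : y * FreeMonoid.of a ^ (M + p2) * FreeMonoid.of a ^ d
        = y * FreeMonoid.of a ^ (M + p2 + d) := by
      rw [mul_assoc, ← pow_add]
    rw [hexp]
    rcases hcases with hcc | hcc
    · rw [show M + p2 + d = M + p1 by omega]
      exact hy1
    · rw [show M + p2 + d = (M + p1) + n by omega, pow_add, ← mul_assoc]
      exact mul_mem hy1 haX
  intro z hz
  -- existence
  obtain ⟨v, hv⟩ := hySRC (FreeMonoid.of a ^ (2 * M + z) * x)
  have hW : y * FreeMonoid.of a ^ (2 * M + z) * (x * v) ∈ starSet (↑X : Set (FreeMonoid A)) := by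
    have heq : y * (FreeMonoid.of a ^ (2 * M + z) * x) * v
        = y * FreeMonoid.of a ^ (2 * M + z) * (x * v) := by
      rw [mul_assoc, mul_assoc, mul_assoc]
    rwa [heq] at hv
  obtain ⟨δ, hδL, hprog⟩ := boundary_lemma hcode ha y (x * v) (2 * M + z) (by omega) hW
  obtain ⟨p, hpdef⟩ : ∃ p, p = δ % n := ⟨_, rfl⟩
  obtain ⟨w, hwdef⟩ : ∃ w, w = z + n - p := ⟨_, rfl⟩
  obtain ⟨q, hqdef⟩ : ∃ q, q = w % n := ⟨_, rfl⟩
  have hpn : p < n := hpdef ▸ Nat.mod_lt _ hnpos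
  have hqn : q < n := hqdef ▸ Nat.mod_lt _ hnpos
  obtain ⟨c, hcdef⟩ : ∃ c, c = w / n := ⟨_, rfl⟩
  have hwq : n * c + q = w := by rw [hqdef, hcdef]; exact Nat.div_add_mod w n
  -- the residue conditions
  have e1 : (M + p) % n = δ % n := by
    rw [hM', Nat.mul_add_mod, Nat.mod_eq_of_lt hpn, hpdef]
  have hm2arith : M + z - q + n = n * (2 * maxLen X) + n * c + p := by omega
  have e2 : (M + z - q) % n = δ % n := by
    have h5 : 2 * maxLen X + c - 1 + 1 = 2 * maxLen X + c := by omega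
    have h6 : n * (2 * maxLen X + c - 1) + n
        = n * (2 * maxLen X) + n * c := by
      rw [← Nat.mul_succ, Nat.succ_eq_add_one, h5, Nat.mul_add]
    have hm₂eq : M + z - q = n * (2 * maxLen X + c - 1) + p := by omega
    rw [hm₂eq, Nat.mul_add_mod, Nat.mod_eq_of_lt hpn, hpdef]
  have e3 : (p + q) % n = z := by
    have h7 : (p + q) % n = (p + w) % n := by
      rw [hqdef]; exact (Nat.mod_modEq w n).add_left p
    rw [h7, show p + w = z + n by omega, Nat.add_mod_right, Nat.mod_eq_of_lt hz]
  -- first boundary : p ∈ P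
  have hb1 := hprog (M + p) (by omega) (by omega) e1
  have hpP : p ∈ P := (hyP p).2 ⟨hpn, hb1.1⟩
  -- second boundary : q ∈ Q
  have hb2 := hprog (M + z - q) (by omega) (by omega) e2
  have hqQ : q ∈ Q := by
    refine (hxQ q).2 ⟨hqn, v, ?_⟩
    have heq2 : FreeMonoid.of a ^ (q + M) * x * v
        = FreeMonoid.of a ^ (2 * M + z - (M + z - q)) * (x * v) := by
      rw [show 2 * M + z - (M + z - q) = q + M by omega, mul_assoc]
    rw [heq2]
    exact hb2.2
  refine ⟨(p, q), ⟨hpP, hqQ, e3⟩, ?_⟩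
  rintro ⟨p', q'⟩ ⟨hp', hq', hz'⟩
  have hzz : (p' + q') % n = (p + q) % n := by rw [hz', e3]
  rcases lt_trichotomy q' q with hlt | heq | hgt
  · exact absurd (key p' q' p q hp' hq' hpP hqQ hzz hlt) (fun h => h)
  · subst heq
    have hp'n : p' < n := ((hyP p').1 hp').1
    have hcan : p' % n = p % n := Nat.ModEq.add_right_cancel' q' hzz
    have hpe : p' = p := by
      rw [Nat.mod_eq_of_lt hp'n, Nat.mod_eq_of_lt hpn] at hcan
      exact hcan
    simp [hpe]
  · exact absurd (key p q p' q' hpP hqQ hp' hq' hzz.symm hgt) (fun h => h)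

end CodesConj
end
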